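/- (Two time-point G-computation, s=2) In a two time-point longitudinal study with data (L(0), A(0), L(1), A(1), Y) and counterfactuals Y_{a(0),a(1)} satisfying consistency Y = Y_{A(0),A(1)}, SRA (A(0) ⟂ X | L(0) and A(1) ⟂ X | (A(0), L(0), L(1)) where X is the collection of all counterfactuals of L(1) and Y), and positivity, the counterfactual mean is identified: E[Y_{a(0),a(1)}] = Σ_{l(0),l(1)} E[Y | A(0)=a(0), A(1)=a(1), L(0)=l(0), L(1)=l(1)] · P(L(1)=l(1) | A(0)=a(0), L(0)=l(0)) · P(L(0)=l(0)). -/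

import Mathlib

open Finset
open scoped Classical

noncomputable section

def pr {Ω : Type} [Fintype Ω] (μ : Ω → ℝ) (E : Ω → Prop) : ℝ :=
  ∑ ω, if E ω then μ ω else 0

def cpr {Ω : Type} [Fintype Ω] (μ : Ω → ℝ) (E F : Ω → Prop) : ℝ :=
  pr μ (fun ω => E ω ∧ F ω) / pr μ F

def ex {Ω : Type} [Fintype Ω] (μ : Ω → ℝ) (f : Ω → ℝ) : ℝ :=
  ∑ ω, f ω * μ ω

def cex {Ω : Type} [Fintype Ω] (μ : Ω → ℝ) (f : Ω → ℝ) (F : Ω → Prop) : ℝ :=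
  (∑ ω, if F ω then f ω * μ ω else 0) / pr μ F

section Helpers

variable {Ω : Type} [Fintype Ω]

lemma pr_nonneg (μ : Ω → ℝ) (hμ : ∀ ω, 0 ≤ μ ω) (E : Ω → Prop) : 0 ≤ pr μ E := by
  apply Finset.sum_nonneg
  intro ω _
  split
  · exact hμ ω
  · exact le_refl 0

lemma pr_congr (μ : Ω → ℝ) {E F : Ω → Prop} (h : ∀ ω, E ω ↔ F ω) : pr μ E = pr μ F := by
  unfold pr
  apply Finset.sum_congr rfl
  intro ω _
  simp [h ω]

lemma cpr_congr (μ : Ω → ℝ) {E E' : Ω → Prop} (F : Ω → Prop) (h : ∀ ω, E ω ↔ E' ω) :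
    cpr μ E F = cpr μ E' F := by
  unfold cpr
  rw [pr_congr μ (fun ω => and_congr_left' (h ω))]

lemma pr_mono (μ : Ω → ℝ) (hμ : ∀ ω, 0 ≤ μ ω) {E F : Ω → Prop} (h : ∀ ω, E ω → F ω) :
    pr μ E ≤ pr μ F := by
  apply Finset.sum_le_sum
  intro ω _
  split_ifs with h1 h2
  · exact le_refl _
  · exact absurd (h ω h1) h2
  · exact hμ ω
  · exact le_refl _

lemma pr_eq_zero_of (μ : Ω → ℝ) (hμ : ∀ ω, 0 ≤ μ ω) {E F : Ω → Prop}
    (h : ∀ ω, E ω → F ω) (hF : pr μ F = 0) : pr μ E = 0 :=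
  le_antisymm (hF ▸ pr_mono μ hμ h) (pr_nonneg μ hμ E)

lemma pr_of_empty (μ : Ω → ℝ) {E : Ω → Prop} (h : ∀ ω, ¬ E ω) : pr μ E = 0 := by
  unfold pr
  apply Finset.sum_eq_zero
  intro ω _
  simp [h ω]

lemma group_by {κ : Type} [DecidableEq κ] (μ : Ω → ℝ) (T : Ω → κ) (s : Finset κ)
    (hs : ∀ ω, T ω ∈ s) (E : Ω → Prop) (f : Ω → ℝ) (g : κ → ℝ)
    (hf : ∀ ω, E ω → f ω = g (T ω)) :
    ∑ t ∈ s, g t * pr μ (fun ω => E ω ∧ T ω = t) =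
    ∑ ω, if E ω then f ω * μ ω else 0 := by
  have key : ∀ t, g t * pr μ (fun ω => E ω ∧ T ω = t) =
      ∑ ω, if E ω ∧ T ω = t then f ω * μ ω else 0 := by
    intro t
    unfold pr
    rw [Finset.mul_sum]
    apply Finset.sum_congr rfl
    intro ω _
    by_cases h : E ω ∧ T ω = t
    · have : f ω = g t := by rw [hf ω h.1, h.2]
      simp [h, this]
    · simp [h]
  simp_rw [key]
  rw [Finset.sum_comm]
  apply Finset.sum_congr rfl
  intro ω _
  by_cases hE : E ω
  · simp only [hE, true_and]
    rw [Finset.sum_ite_eq s (T ω) (fun _ => f ω * μ ω)]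
    simp [hs ω]
  · simp [hE]

lemma sum_fiber_restrict {κ : Type} [Fintype κ] (v : Ω → ℝ) (L : Ω → κ) :
    ∑ l : κ, ∑ ω, (if L ω = l then v ω else 0) = ∑ ω, v ω := by
  rw [Finset.sum_comm]
  apply Finset.sum_congr rfl
  intro ω _
  rw [Finset.sum_ite_eq Finset.univ (L ω) (fun _ => v ω)]
  simp

end Helpers

lemma cond_indep_helper {x a b c : ℝ} (hc : c ≠ 0) (h : x / c = a / c * (b / c)) :
    b * a = x * c := by
  have h2 : (x * c) * c = (a * b) * c := by
    field_simp at h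
    linear_combination c * h
  have h3 := mul_right_cancel₀ hc h2
  linear_combination -h3

/-- two time-point G-computation (s = 2): under consistency, SRA
and positivity, the counterfactual mean `E[Y_{a0,a1}]` is identified by the
G-computation formula. -/
theorem two_timepoint_gcomputation
    {Ω 𝒜₀ 𝒜₁ ℒ₀ ℒ₁ : Type} [Fintype Ω] [Fintype 𝒜₀] [Fintype 𝒜₁] [Fintype ℒ₀] [Fintype ℒ₁]
    (μ : Ω → ℝ) (hμ : ∀ ω, 0 ≤ μ ω) (hsum : ∑ ω, μ ω = 1)
    (L0 : Ω → ℒ₀) (A0 : Ω → 𝒜₀) (L1 : Ω → ℒ₁) (A1 : Ω → 𝒜₁)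
    (CL1 : 𝒜₀ → Ω → ℒ₁) (CY : 𝒜₀ → 𝒜₁ → Ω → ℝ) (Y : Ω → ℝ)
    (hconsL : ∀ ω, L1 ω = CL1 (A0 ω) ω)
    (hconsY : ∀ ω, Y ω = CY (A0 ω) (A1 ω) ω)
    (SRA0 : ∀ (a0 : 𝒜₀) (c : 𝒜₀ → ℒ₁) (y : 𝒜₀ → 𝒜₁ → ℝ) (l0 : ℒ₀),
      pr μ (fun ω => L0 ω = l0) > 0 →
      cpr μ (fun ω => A0 ω = a0 ∧ ((∀ a, CL1 a ω = c a) ∧ ∀ a a', CY a a' ω = y a a'))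
        (fun ω => L0 ω = l0) =
      cpr μ (fun ω => A0 ω = a0) (fun ω => L0 ω = l0) *
      cpr μ (fun ω => (∀ a, CL1 a ω = c a) ∧ ∀ a a', CY a a' ω = y a a')
        (fun ω => L0 ω = l0))
    (SRA1 : ∀ (a1 : 𝒜₁) (c : 𝒜₀ → ℒ₁) (y : 𝒜₀ → 𝒜₁ → ℝ) (a0 : 𝒜₀) (l0 : ℒ₀) (l1 : ℒ₁),
      pr μ (fun ω => A0 ω = a0 ∧ L0 ω = l0 ∧ L1 ω = l1) > 0 →
      cpr μ (fun ω => A1 ω = a1 ∧ ((∀ a, CL1 a ω = c a) ∧ ∀ a a', CY a a' ω = y a a'))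
        (fun ω => A0 ω = a0 ∧ L0 ω = l0 ∧ L1 ω = l1) =
      cpr μ (fun ω => A1 ω = a1) (fun ω => A0 ω = a0 ∧ L0 ω = l0 ∧ L1 ω = l1) *
      cpr μ (fun ω => (∀ a, CL1 a ω = c a) ∧ ∀ a a', CY a a' ω = y a a')
        (fun ω => A0 ω = a0 ∧ L0 ω = l0 ∧ L1 ω = l1))
    (POS0 : ∀ (a0 : 𝒜₀) (l0 : ℒ₀), pr μ (fun ω => L0 ω = l0) > 0 →
      cpr μ (fun ω => A0 ω = a0) (fun ω => L0 ω = l0) > 0)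
    (POS1 : ∀ (a1 : 𝒜₁) (a0 : 𝒜₀) (l0 : ℒ₀) (l1 : ℒ₁),
      pr μ (fun ω => A0 ω = a0 ∧ L0 ω = l0 ∧ L1 ω = l1) > 0 →
      cpr μ (fun ω => A1 ω = a1) (fun ω => A0 ω = a0 ∧ L0 ω = l0 ∧ L1 ω = l1) > 0)
    (a0 : 𝒜₀) (a1 : 𝒜₁) :
    ex μ (CY a0 a1) =
    ∑ l0 : ℒ₀, ∑ l1 : ℒ₁,
      cex μ Y (fun ω => A0 ω = a0 ∧ A1 ω = a1 ∧ L0 ω = l0 ∧ L1 ω = l1) *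
      cpr μ (fun ω => L1 ω = l1) (fun ω => A0 ω = a0 ∧ L0 ω = l0) *
      pr μ (fun ω => L0 ω = l0) := by
  classical
  set T : Ω → (𝒜₀ → ℒ₁) × (𝒜₀ → 𝒜₁ → ℝ) :=
    fun ω => (fun a => CL1 a ω, fun a a' => CY a a' ω) with hT
  set 𝒯 : Finset ((𝒜₀ → ℒ₁) × (𝒜₀ → 𝒜₁ → ℝ)) := Finset.image T Finset.univ with h𝒯
  have hmem : ∀ ω, T ω ∈ 𝒯 := fun ω => Finset.mem_image_of_mem T (Finset.mem_univ ω)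
  have hXt : ∀ (t : (𝒜₀ → ℒ₁) × (𝒜₀ → 𝒜₁ → ℝ)) (ω : Ω),
      ((∀ a, CL1 a ω = t.1 a) ∧ ∀ a a', CY a a' ω = t.2 a a') ↔ T ω = t := by
    intro t ω
    rw [Prod.ext_iff]
    constructor
    · rintro ⟨h1, h2⟩
      exact ⟨funext h1, funext fun a => funext fun a' => h2 a a'⟩
    · rintro ⟨h1, h2⟩
      exact ⟨fun a => congrFun h1 a, fun a a' => congrFun (congrFun h2 a) a'⟩
  -- Step 1: group the LHS by (l0, atom of T)
  have hLHS : ex μ (CY a0 a1) =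
      ∑ l0 : ℒ₀, ∑ t ∈ 𝒯, t.2 a0 a1 * pr μ (fun ω => L0 ω = l0 ∧ T ω = t) := by
    have h1 : ∀ l0 : ℒ₀, ∑ t ∈ 𝒯, t.2 a0 a1 * pr μ (fun ω => L0 ω = l0 ∧ T ω = t)
        = ∑ ω, if L0 ω = l0 then CY a0 a1 ω * μ ω else 0 := fun l0 =>
      group_by μ T 𝒯 hmem _ (CY a0 a1) (fun t => t.2 a0 a1) (fun ω _ => rfl)
    simp_rw [h1]
    rw [sum_fiber_restrict (fun ω => CY a0 a1 ω * μ ω) L0]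
    rfl
  rw [hLHS]
  apply Finset.sum_congr rfl
  intro l0 _
  have hsplit : ∑ t ∈ 𝒯, t.2 a0 a1 * pr μ (fun ω => L0 ω = l0 ∧ T ω = t)
      = ∑ l1 : ℒ₁, ∑ t ∈ 𝒯,
        (if t.1 a0 = l1 then t.2 a0 a1 * pr μ (fun ω => L0 ω = l0 ∧ T ω = t) else 0) := by
    rw [Finset.sum_comm]
    apply Finset.sum_congr rfl
    intro t _
    rw [Finset.sum_ite_eq Finset.univ (t.1 a0)
      (fun _ => t.2 a0 a1 * pr μ (fun ω => L0 ω = l0 ∧ T ω = t))]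
    simp
  rw [hsplit]
  apply Finset.sum_congr rfl
  intro l1 _
  by_cases hpL0 : pr μ (fun ω => L0 ω = l0) = 0
  · rw [hpL0, mul_zero]
    apply Finset.sum_eq_zero
    intro t _
    split_ifs with h
    · rw [pr_eq_zero_of μ hμ (fun ω hw => hw.1) hpL0, mul_zero]
    · rfl
  have hpL0' : 0 < pr μ (fun ω => L0 ω = l0) :=
    lt_of_le_of_ne (pr_nonneg μ hμ _) (Ne.symm hpL0)
  have hApos := POS0 a0 l0 hpL0'
  rw [cpr] at hApos
  have hpA : 0 < pr μ (fun ω => A0 ω = a0 ∧ L0 ω = l0) := by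
    have := mul_pos hApos hpL0'
    rwa [div_mul_cancel₀ _ hpL0] at this
  set pL0 := pr μ (fun ω => L0 ω = l0) with hpL0def
  set pA := pr μ (fun ω => A0 ω = a0 ∧ L0 ω = l0) with hpAdef
  set p1 := pr μ (fun ω => A0 ω = a0 ∧ L0 ω = l0 ∧ L1 ω = l1) with hp1def
  -- SRA0 consequence + consistency
  have keyA : ∀ t ∈ 𝒯, t.1 a0 = l1 →
      pr μ (fun ω => L0 ω = l0 ∧ T ω = t)
        = pr μ (fun ω => T ω = t ∧ (A0 ω = a0 ∧ L0 ω = l0 ∧ L1 ω = l1)) * pL0 / pA := by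
    intro t _ hl1
    have h := SRA0 a0 t.1 t.2 l0 hpL0'
    have e0 : ∀ ω, (A0 ω = a0 ∧ ((∀ a, CL1 a ω = t.1 a) ∧ ∀ a a', CY a a' ω = t.2 a a'))
        ↔ (A0 ω = a0 ∧ T ω = t) := fun ω => and_congr_right fun _ => hXt t ω
    rw [cpr_congr μ (fun ω => L0 ω = l0) e0, cpr_congr μ (fun ω => L0 ω = l0) (hXt t)] at h
    rw [cpr, cpr, cpr] at h
    have e1 : pr μ (fun ω => (A0 ω = a0 ∧ T ω = t) ∧ L0 ω = l0)
        = pr μ (fun ω => T ω = t ∧ (A0 ω = a0 ∧ L0 ω = l0 ∧ L1 ω = l1)) := by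
      apply pr_congr
      intro ω
      constructor
      · rintro ⟨⟨hA0, hTt⟩, hL0⟩
        refine ⟨hTt, hA0, hL0, ?_⟩
        have h1 : (fun a => CL1 a ω) = t.1 := congrArg Prod.fst hTt
        rw [hconsL ω, hA0, ← hl1]
        exact congrFun h1 a0
      · rintro ⟨hTt, hA0, hL0, _⟩
        exact ⟨⟨hA0, hTt⟩, hL0⟩
    rw [e1] at h
    rw [pr_congr μ (fun ω => and_comm (a := L0 ω = l0) (b := T ω = t))]
    rw [eq_div_iff (ne_of_gt hpA)]
    exact cond_indep_helper hpL0 h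
  -- the inner claim
  have claimC : ∑ t ∈ 𝒯, (if t.1 a0 = l1 then
        t.2 a0 a1 * pr μ (fun ω => T ω = t ∧ (A0 ω = a0 ∧ L0 ω = l0 ∧ L1 ω = l1)) else 0)
      = cex μ Y (fun ω => A0 ω = a0 ∧ A1 ω = a1 ∧ L0 ω = l0 ∧ L1 ω = l1) * p1 := by
    by_cases hp1 : p1 = 0
    · rw [hp1, mul_zero]
      apply Finset.sum_eq_zero
      intro t _
      split_ifs with h
      · rw [pr_eq_zero_of μ hμ (fun ω hw => hw.2) hp1, mul_zero]
      · rfl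
    · have hp1' : 0 < p1 := lt_of_le_of_ne (pr_nonneg μ hμ _) (Ne.symm hp1)
      have hBpos := POS1 a1 a0 l0 l1 hp1'
      rw [cpr] at hBpos
      have hpB0 : 0 < pr μ (fun ω => A1 ω = a1 ∧ (A0 ω = a0 ∧ L0 ω = l0 ∧ L1 ω = l1)) := by
        have := mul_pos hBpos hp1'
        rwa [div_mul_cancel₀ _ hp1] at this
      have hBB : pr μ (fun ω => A1 ω = a1 ∧ (A0 ω = a0 ∧ L0 ω = l0 ∧ L1 ω = l1))
          = pr μ (fun ω => A0 ω = a0 ∧ A1 ω = a1 ∧ L0 ω = l0 ∧ L1 ω = l1) :=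
        pr_congr μ (fun ω => by tauto)
      set pB := pr μ (fun ω => A0 ω = a0 ∧ A1 ω = a1 ∧ L0 ω = l0 ∧ L1 ω = l1) with hpBdef
      have hpB : 0 < pB := hBB ▸ hpB0
      have keyB : ∀ t, pr μ (fun ω => T ω = t ∧ (A0 ω = a0 ∧ L0 ω = l0 ∧ L1 ω = l1))
          = pr μ (fun ω => (A0 ω = a0 ∧ A1 ω = a1 ∧ L0 ω = l0 ∧ L1 ω = l1) ∧ T ω = t)
            * p1 / pB := by
        intro t
        have h := SRA1 a1 t.1 t.2 a0 l0 l1 hp1'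
        have e0 : ∀ ω, (A1 ω = a1 ∧ ((∀ a, CL1 a ω = t.1 a) ∧ ∀ a a', CY a a' ω = t.2 a a'))
            ↔ (A1 ω = a1 ∧ T ω = t) := fun ω => and_congr_right fun _ => hXt t ω
        rw [cpr_congr μ (fun ω => A0 ω = a0 ∧ L0 ω = l0 ∧ L1 ω = l1) e0,
            cpr_congr μ (fun ω => A0 ω = a0 ∧ L0 ω = l0 ∧ L1 ω = l1) (hXt t)] at h
        rw [cpr, cpr, cpr, hBB] at h
        have e1 : pr μ (fun ω => (A1 ω = a1 ∧ T ω = t) ∧ (A0 ω = a0 ∧ L0 ω = l0 ∧ L1 ω = l1))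
            = pr μ (fun ω => (A0 ω = a0 ∧ A1 ω = a1 ∧ L0 ω = l0 ∧ L1 ω = l1) ∧ T ω = t) :=
          pr_congr μ (fun ω => by tauto)
        rw [e1] at h
        rw [eq_div_iff (ne_of_gt hpB)]
        exact cond_indep_helper hp1 h
      have hzero : ∀ t, ¬ (t.1 a0 = l1) →
          pr μ (fun ω => (A0 ω = a0 ∧ A1 ω = a1 ∧ L0 ω = l0 ∧ L1 ω = l1) ∧ T ω = t) = 0 := by
        intro t ht
        apply pr_of_empty
        rintro ω ⟨⟨hA0, _, _, hL1⟩, hTt⟩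
        apply ht
        have h1 : (fun a => CL1 a ω) = t.1 := congrArg Prod.fst hTt
        rw [← congrFun h1 a0, ← hA0, ← hconsL ω]
        exact hL1
      have hterm : ∀ t ∈ 𝒯, (if t.1 a0 = l1 then
            t.2 a0 a1 * pr μ (fun ω => T ω = t ∧ (A0 ω = a0 ∧ L0 ω = l0 ∧ L1 ω = l1)) else 0)
          = t.2 a0 a1 *
            pr μ (fun ω => (A0 ω = a0 ∧ A1 ω = a1 ∧ L0 ω = l0 ∧ L1 ω = l1) ∧ T ω = t)
            * (p1 / pB) := by
        intro t _
        split_ifs with h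
        · rw [keyB t]; ring
        · rw [hzero t h, mul_zero, zero_mul]
      rw [Finset.sum_congr rfl hterm, ← Finset.sum_mul,
        group_by μ T 𝒯 hmem (fun ω => A0 ω = a0 ∧ A1 ω = a1 ∧ L0 ω = l0 ∧ L1 ω = l1) Y
          (fun t => t.2 a0 a1)
          (fun ω hω => by rw [hconsY ω, hω.1, hω.2.1]), cex, ← hpBdef]
      ring
  -- final assembly
  have hterm2 : ∀ t ∈ 𝒯, (if t.1 a0 = l1 then
        t.2 a0 a1 * pr μ (fun ω => L0 ω = l0 ∧ T ω = t) else 0)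
      = (if t.1 a0 = l1 then
          t.2 a0 a1 * pr μ (fun ω => T ω = t ∧ (A0 ω = a0 ∧ L0 ω = l0 ∧ L1 ω = l1)) else 0)
        * (pL0 / pA) := by
    intro t ht
    split_ifs with h
    · rw [keyA t ht h]; ring
    · rw [zero_mul]
  rw [Finset.sum_congr rfl hterm2, ← Finset.sum_mul, claimC, cpr]
  have hnum : pr μ (fun ω => L1 ω = l1 ∧ (A0 ω = a0 ∧ L0 ω = l0)) = p1 :=
    pr_congr μ (fun ω => by tauto)
  rw [hnum, ← hpAdef]
  ring
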